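/- The one-step energy error of the Verlet map is of order h³: for every radius ρ > 0 there exists a constant C > 0 (depending on ν, M, K and ρ) such that for all h ∈ (0,1] and all (q,p) ∈ ℝ^ν × ℝ^ν with ‖p‖ ≤ ρ, |H(Φ_h(q,p)) − H(q,p)| ≤ C h³, where H(q,p) = ½ pᵀM⁻¹p + U(q). -/

import Mathlib

open MeasureTheory Matrix

/-- The gradient of `U : ℝ^ν → ℝ` in the standard basis. -/
noncomputable def grad {ν : ℕ} (U : (Fin ν → ℝ) → ℝ) (q : Fin ν → ℝ) : Fin ν → ℝ :=
  fun i => fderiv ℝ U q (Pi.single i 1)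

/-- One step of the Verlet integrator with stepsize `h`, mass matrix `M` and
potential `U`. -/
noncomputable def verlet {ν : ℕ} (h : ℝ) (M : Matrix (Fin ν) (Fin ν) ℝ)
    (U : (Fin ν → ℝ) → ℝ) (x : (Fin ν → ℝ) × (Fin ν → ℝ)) :
    (Fin ν → ℝ) × (Fin ν → ℝ) :=
  let phalf := x.2 - (h / 2) • grad U x.1
  let q₁ := x.1 + h • (M⁻¹).mulVec phalf
  (q₁, phalf - (h / 2) • grad U q₁)

/-- The Hamiltonian `H(q,p) = ½ pᵀM⁻¹p + U(q)`. -/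
noncomputable def hamiltonian {ν : ℕ} (M : Matrix (Fin ν) (Fin ν) ℝ)
    (U : (Fin ν → ℝ) → ℝ) (x : (Fin ν → ℝ) × (Fin ν → ℝ)) : ℝ :=
  (1 / 2) * (x.2 ⬝ᵥ (M⁻¹).mulVec x.2) + U x.1

section Aux

variable {ν : ℕ} {E F : Type*} [NormedAddCommGroup E] [NormedSpace ℝ E]
  [NormedAddCommGroup F] [NormedSpace ℝ F]

lemma abs_dotProduct_le (v w : Fin ν → ℝ) : |v ⬝ᵥ w| ≤ ν * ‖v‖ * ‖w‖ := by
  calc |v ⬝ᵥ w| = |∑ i, v i * w i| := rfl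
    _ ≤ ∑ i, |v i * w i| := Finset.abs_sum_le_sum_abs _ _
    _ ≤ ∑ _i : Fin ν, ‖v‖ * ‖w‖ := by
        refine Finset.sum_le_sum fun i _ => ?_
        rw [abs_mul]
        exact mul_le_mul (by simpa [Real.norm_eq_abs] using norm_le_pi_norm v i)
          (by simpa [Real.norm_eq_abs] using norm_le_pi_norm w i) (abs_nonneg _) (norm_nonneg _)
    _ = ν * ‖v‖ * ‖w‖ := by
        simp [Finset.sum_const, Finset.card_univ]; ring

lemma fderiv_apply_eq_dot (f : (Fin ν → ℝ) → ℝ) (x v : Fin ν → ℝ) :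
    fderiv ℝ f x v = v ⬝ᵥ grad f x := by
  have hv : v = ∑ i, v i • (Pi.single i (1:ℝ) : Fin ν → ℝ) := by
    funext j
    simp [Pi.single_apply, Finset.sum_apply]
  conv_lhs => rw [hv]
  rw [map_sum]
  simp [grad, dotProduct]

lemma norm_grad_le (f : (Fin ν → ℝ) → ℝ) (x : Fin ν → ℝ) :
    ‖grad f x‖ ≤ ‖fderiv ℝ f x‖ := by
  refine (pi_norm_le_iff_of_nonneg (norm_nonneg _)).2 fun i => ?_
  calc ‖grad f x i‖ = ‖fderiv ℝ f x (Pi.single i 1)‖ := rfl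
    _ ≤ ‖fderiv ℝ f x‖ * ‖(Pi.single i (1:ℝ) : Fin ν → ℝ)‖ := (fderiv ℝ f x).le_opNorm _
    _ = ‖fderiv ℝ f x‖ := by rw [Pi.norm_single]; simp

lemma norm_grad_sub_le (f : (Fin ν → ℝ) → ℝ) (x y : Fin ν → ℝ) :
    ‖grad f x - grad f y‖ ≤ ‖fderiv ℝ f x - fderiv ℝ f y‖ := by
  refine (pi_norm_le_iff_of_nonneg (norm_nonneg _)).2 fun i => ?_
  calc ‖(grad f x - grad f y) i‖
      = ‖(fderiv ℝ f x - fderiv ℝ f y) (Pi.single i 1)‖ := by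
        simp [grad, Pi.sub_apply, ContinuousLinearMap.sub_apply]
    _ ≤ ‖fderiv ℝ f x - fderiv ℝ f y‖ * ‖(Pi.single i (1:ℝ) : Fin ν → ℝ)‖ :=
        (fderiv ℝ f x - fderiv ℝ f y).le_opNorm _
    _ = ‖fderiv ℝ f x - fderiv ℝ f y‖ := by rw [Pi.norm_single]; simp

lemma norm_fderiv_le_iter (f : E → F) (x : E) :
    ‖fderiv ℝ f x‖ ≤ ‖iteratedFDeriv ℝ 1 f x‖ := by
  refine ContinuousLinearMap.opNorm_le_bound _ (norm_nonneg _) fun v => ?_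
  have h := (iteratedFDeriv ℝ 1 f x).le_opNorm (fun _ => v)
  simpa [iteratedFDeriv_one_apply] using h

lemma norm_sub_le_of_mem_segment' {x y z : E} (hz : z ∈ segment ℝ x y) :
    ‖z - x‖ ≤ ‖y - x‖ := by
  obtain ⟨a, b, ha, hb, hab, rfl⟩ := hz
  have : a • x + b • y - x = b • (y - x) := by
    have hax : a = 1 - b := by linarith
    rw [hax]; module
  rw [this, norm_smul, Real.norm_eq_abs, abs_of_nonneg hb]
  nlinarith [norm_nonneg (y - x)]

lemma taylor_one {f : E → F} {C : ℝ} (hC : 0 ≤ C) (hf : Differentiable ℝ f)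
    (hlip : ∀ x y, ‖fderiv ℝ f x - fderiv ℝ f y‖ ≤ C * ‖x - y‖) (x y : E) :
    ‖f y - f x - fderiv ℝ f x (y - x)‖ ≤ C * ‖y - x‖ * ‖y - x‖ := by
  have := Convex.norm_image_sub_le_of_norm_fderiv_le' (𝕜 := ℝ)
    (f := f) (s := segment ℝ x y) (φ := fderiv ℝ f x) (C := C * ‖y - x‖)
    (fun z _ => (hf z))
    (fun z hz => le_trans (hlip z x) (by
      have := norm_sub_le_of_mem_segment' hz
      nlinarith))
    (convex_segment x y) (left_mem_segment ℝ x y) (right_mem_segment ℝ x y)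
  calc ‖f y - f x - fderiv ℝ f x (y - x)‖ ≤ C * ‖y - x‖ * ‖y - x‖ := this

end Aux

section Taylor2

variable {E : Type*} [NormedAddCommGroup E] [NormedSpace ℝ E]

lemma taylor_two {f : E → ℝ} {C : ℝ} (hC : 0 ≤ C)
    (h1 : Differentiable ℝ f) (h2 : Differentiable ℝ (fderiv ℝ f))
    (hT2 : ∀ x y, ‖fderiv ℝ f y - fderiv ℝ f x - fderiv ℝ (fderiv ℝ f) x (y - x)‖
      ≤ C * ‖y - x‖ * ‖y - x‖) (x y : E) :
    |f y - f x - fderiv ℝ f x (y - x)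
        - (1/2) * (fderiv ℝ (fderiv ℝ f) x (y - x)) (y - x)|
      ≤ C * ‖y - x‖ * ‖y - x‖ * ‖y - x‖ := by
  set B := fderiv ℝ (fderiv ℝ f) x with hB
  have Bsymm : ∀ v w, B v w = B w v :=
    second_derivative_symmetric (fun z => (h1 z).hasFDerivAt) (h2 x).hasFDerivAt
  -- the auxiliary function
  set G : E → ℝ := fun z => f z - (1/2) * (B (z - x)) (z - x) with hG
  have hGderiv : ∀ z, HasFDerivAt G (fderiv ℝ f z - B (z - x)) z := by
    intro z
    have hid : HasFDerivAt (fun z : E => z - x) (ContinuousLinearMap.id ℝ E) z :=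
      (hasFDerivAt_id z).sub_const x
    have hc : HasFDerivAt (fun z : E => B (z - x)) B z := by
      have := B.hasFDerivAt.comp z hid
      simpa [Function.comp_def, map_sub] using this
    have hq : HasFDerivAt (fun z : E => (B (z - x)) (z - x))
        ((B (z - x)).comp (ContinuousLinearMap.id ℝ E) + B.flip (z - x)) z :=
      hc.clm_apply hid
    have hq' : (B (z - x)).comp (ContinuousLinearMap.id ℝ E) + B.flip (z - x)
        = (2 : ℝ) • B (z - x) := by
      ext v
      simp only [ContinuousLinearMap.add_apply, ContinuousLinearMap.comp_apply,
        ContinuousLinearMap.flip_apply, ContinuousLinearMap.smul_apply,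
        ContinuousLinearMap.id_apply, smul_eq_mul]
      rw [Bsymm v (z - x)]
      ring
    rw [hq'] at hq
    have := ((h1 z).hasFDerivAt).sub (hq.const_mul (1/2))
    refine this.congr_fderiv ?_
    ext v
    simp only [ContinuousLinearMap.sub_apply, ContinuousLinearMap.smul_apply, smul_eq_mul]
    ring
  have hbound : ∀ z ∈ segment ℝ x y,
      ‖(fderiv ℝ f z - B (z - x)) - fderiv ℝ f x‖ ≤ C * ‖y - x‖ * ‖y - x‖ := by
    intro z hz
    have h1' : ‖fderiv ℝ f z - fderiv ℝ f x - B (z - x)‖ ≤ C * ‖z - x‖ * ‖z - x‖ := hT2 x z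
    have h2' : ‖z - x‖ ≤ ‖y - x‖ := norm_sub_le_of_mem_segment' hz
    have : (fderiv ℝ f z - B (z - x)) - fderiv ℝ f x
        = fderiv ℝ f z - fderiv ℝ f x - B (z - x) := by abel
    rw [this]
    refine h1'.trans ?_
    have h3 : ‖z - x‖ * ‖z - x‖ ≤ ‖y - x‖ * ‖y - x‖ :=
      mul_le_mul h2' h2' (norm_nonneg _) (norm_nonneg _)
    nlinarith
  have hmain := Convex.norm_image_sub_le_of_norm_hasFDerivWithin_le'
    (f := G) (f' := fun z => fderiv ℝ f z - B (z - x)) (φ := fderiv ℝ f x)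
    (C := C * ‖y - x‖ * ‖y - x‖) (s := segment ℝ x y)
    (fun z _ => (hGderiv z).hasFDerivWithinAt) hbound (convex_segment x y)
    (left_mem_segment ℝ x y) (right_mem_segment ℝ x y)
  have hGy : G y - G x - fderiv ℝ f x (y - x)
      = f y - f x - fderiv ℝ f x (y - x) - (1/2) * (B (y - x)) (y - x) := by
    simp [hG]
    ring
  rw [hGy] at hmain
  simpa [Real.norm_eq_abs] using hmain

set_option maxHeartbeats 8000000 in
/-- The one-step energy error of the Verlet map is of order `h³`. -/
theorem verlet_energy_error_cubic
    (ν : ℕ) (M : Matrix (Fin ν) (Fin ν) ℝ) (hM : M.PosDef)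
    (U : (Fin ν → ℝ) → ℝ) (hU : ContDiff ℝ 3 U)
    (K : ℝ) (hK : 0 < K)
    (hD1 : ∀ q, ‖iteratedFDeriv ℝ 1 U q‖ ≤ K)
    (hD2 : ∀ q, ‖iteratedFDeriv ℝ 2 U q‖ ≤ K)
    (hD3 : ∀ q, ‖iteratedFDeriv ℝ 3 U q‖ ≤ K) :
    ∀ ρ : ℝ, 0 < ρ → ∃ C : ℝ, 0 < C ∧
      ∀ h ∈ Set.Ioc (0 : ℝ) 1, ∀ q p : Fin ν → ℝ, ‖p‖ ≤ ρ →
        |hamiltonian M U (verlet h M U (q, p)) - hamiltonian M U (q, p)|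
          ≤ C * h ^ 3 := by
  intro ρ hρ
  -- differentiability facts
  have hU1 : Differentiable ℝ U := hU.differentiable (by norm_num)
  have hUf : ContDiff ℝ 2 (fderiv ℝ U) := hU.fderiv_right (m := 2) (by norm_num)
  have hU2 : Differentiable ℝ (fderiv ℝ U) := hUf.differentiable (by norm_num)
  have hUff : ContDiff ℝ 1 (fderiv ℝ (fderiv ℝ U)) := hUf.fderiv_right (m := 1) (by norm_num)
  have hU3 : Differentiable ℝ (fderiv ℝ (fderiv ℝ U)) := hUff.differentiable (by norm_num)
  -- derivative norm bounds
  have hb1 : ∀ x, ‖fderiv ℝ U x‖ ≤ K := fun x => (norm_fderiv_le_iter U x).trans (hD1 x)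
  have hb2 : ∀ x, ‖fderiv ℝ (fderiv ℝ U) x‖ ≤ K := fun x =>
    (norm_fderiv_le_iter _ x).trans (by rw [norm_iteratedFDeriv_fderiv]; exact hD2 x)
  letI : NormedSpace ℝ ((Fin ν → ℝ) →L[ℝ] (Fin ν → ℝ) →L[ℝ] ℝ) := inferInstance
  letI : NormedAddCommGroup ((Fin ν → ℝ) →L[ℝ] (Fin ν → ℝ) →L[ℝ] ℝ) := inferInstance
  have hb3 : ∀ x, ‖fderiv ℝ (fderiv ℝ (fderiv ℝ U)) x‖ ≤ K := fun x =>
    (norm_fderiv_le_iter _ x).trans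
      (by rw [norm_iteratedFDeriv_fderiv, norm_iteratedFDeriv_fderiv]; exact hD3 x)
  -- Lipschitz bounds
  have lip1 : ∀ x y, ‖fderiv ℝ U x - fderiv ℝ U y‖ ≤ K * ‖x - y‖ := fun x y =>
    Convex.norm_image_sub_le_of_norm_fderiv_le (fun z _ => hU2 z) (fun z _ => hb2 z)
      convex_univ (Set.mem_univ y) (Set.mem_univ x)
  have lip2 : ∀ x y, ‖fderiv ℝ (fderiv ℝ U) x - fderiv ℝ (fderiv ℝ U) y‖ ≤ K * ‖x - y‖ :=
    fun x y =>
    Convex.norm_image_sub_le_of_norm_fderiv_le (fun z _ => hU3 z) (fun z _ => hb3 z)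
      convex_univ (Set.mem_univ y) (Set.mem_univ x)
  -- Taylor estimates
  have T2 : ∀ x y, ‖fderiv ℝ U y - fderiv ℝ U x - fderiv ℝ (fderiv ℝ U) x (y - x)‖
      ≤ K * ‖y - x‖ * ‖y - x‖ := taylor_one hK.le hU2 lip2
  have T1 : ∀ x y, |U y - U x - fderiv ℝ U x (y - x)
      - (1/2) * (fderiv ℝ (fderiv ℝ U) x (y - x)) (y - x)|
      ≤ K * ‖y - x‖ * ‖y - x‖ * ‖y - x‖ := taylor_two hK.le hU1 hU2 T2
  -- operator bound for M⁻¹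
  set T : (Fin ν → ℝ) →L[ℝ] (Fin ν → ℝ) :=
    LinearMap.toContinuousLinearMap (Matrix.mulVecLin M⁻¹) with hT
  set cA : ℝ := ‖T‖ + 1 with hcA
  have hcA0 : (0:ℝ) < cA := by positivity
  have hcAb : ∀ v : Fin ν → ℝ, ‖M⁻¹ *ᵥ v‖ ≤ cA * ‖v‖ := by
    intro v
    have h1 : M⁻¹ *ᵥ v = T v := by
      rw [hT]; rw [LinearMap.coe_toContinuousLinearMap']; rw [Matrix.mulVecLin_apply]
    rw [h1]
    refine (T.le_opNorm v).trans ?_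
    rw [hcA]
    have h2 : (‖T‖ + 1) * ‖v‖ = ‖T‖ * ‖v‖ + ‖v‖ := by ring
    linarith [norm_nonneg v]
  -- symmetry of M⁻¹
  have hsy : (M⁻¹)ᵀ = M⁻¹ := by
    have h1 : (M⁻¹).IsHermitian := hM.isHermitian.inv
    simpa [Matrix.IsHermitian, Matrix.conjTranspose_eq_transpose_of_trivial] using h1
  have Sym : ∀ v u : Fin ν → ℝ, v ⬝ᵥ M⁻¹ *ᵥ u = u ⬝ᵥ M⁻¹ *ᵥ v := by
    intro v u
    rw [Matrix.dotProduct_mulVec, ← Matrix.mulVec_transpose, hsy, dotProduct_comm]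
  -- constants
  set D : ℝ := cA * (ρ + K) with hD
  have hD0 : (0:ℝ) < D := by rw [hD]; exact mul_pos hcA0 (by linarith)
  set c1 : ℝ := K * D * D * (cA * ρ) with hc1
  set c2 : ℝ := K * (D * D * D) with hc2
  set c3 : ℝ := K * D * (cA * K) with hc3
  set c4 : ℝ := (ν : ℝ) * K * (cA * (K * D)) with hc4
  set c4' : ℝ := (ν : ℝ) * (K * D) * (cA * K) with hc4'
  set c5 : ℝ := (ν : ℝ) * (K * D) * (cA * (K * D)) with hc5
  have hc10 : 0 ≤ c1 := by rw [hc1]; positivity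
  have hc20 : 0 ≤ c2 := by rw [hc2]; positivity
  have hc30 : 0 ≤ c3 := by rw [hc3]; positivity
  have hc40 : 0 ≤ c4 := by rw [hc4]; positivity
  have hc4'0 : 0 ≤ c4' := by rw [hc4']; positivity
  have hc50 : 0 ≤ c5 := by rw [hc5]; positivity
  set S : ℝ := c1/2 + c2 + c3/4 + (3*c4 + c4' + c5)/8 with hS
  clear_value T cA D c1 c2 c3 c4 c4' c5 S
  refine ⟨1 + |S|, by positivity, ?_⟩
  rintro h ⟨hh0, hh1⟩ q p hp
  have hh0' : (0:ℝ) ≤ h := hh0.le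
  have hhD0 : (0:ℝ) ≤ h * D := mul_nonneg hh0' hD0.le
  -- the Verlet step data
  set g : Fin ν → ℝ := grad U q with hg
  set ph : Fin ν → ℝ := p - (h / 2) • g with hph
  set δ : Fin ν → ℝ := h • (M⁻¹).mulVec ph with hδ
  set q₁ : Fin ν → ℝ := q + δ with hq₁
  set g₁ : Fin ν → ℝ := grad U q₁ with hg₁
  set p₁ : Fin ν → ℝ := ph - (h / 2) • g₁ with hp₁
  have hver : verlet h M U (q, p) = (q₁, p₁) := rfl
  have hΔ : hamiltonian M U (verlet h M U (q, p)) - hamiltonian M U (q, p)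
      = ((1/2) * (p₁ ⬝ᵥ M⁻¹ *ᵥ p₁) + U q₁) - ((1/2) * (p ⬝ᵥ M⁻¹ *ᵥ p) + U q) := by
    rw [hver]; rfl
  clear_value g ph δ q₁ g₁ p₁
  set e : Fin ν → ℝ := g₁ - g with he
  set f₀ := fderiv ℝ U q with hf₀
  set f₁ := fderiv ℝ U q₁ with hf₁
  set B := fderiv ℝ (fderiv ℝ U) q with hBB
  set bw : ℝ := (B δ) (M⁻¹ *ᵥ p) with hbw
  set bs : ℝ := (B δ) (M⁻¹ *ᵥ g) with hbs
  set L : ℝ := p ⬝ᵥ M⁻¹ *ᵥ g₁ - p ⬝ᵥ M⁻¹ *ᵥ g - bw with hL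
  set r : ℝ := U q₁ - U q - f₀ δ - (1/2) * ((B δ) δ) with hr
  clear_value e f₀ f₁ B bw bs L r
  have conv : ∀ (x v : Fin ν → ℝ), fderiv ℝ U x v = v ⬝ᵥ grad U x := fderiv_apply_eq_dot U
  have hδws : δ = h • (M⁻¹ *ᵥ p) - (h^2/2) • (M⁻¹ *ᵥ g) := by
    rw [hδ, hph, Matrix.mulVec_sub, Matrix.mulVec_smul]
    module
  -- conversion facts
  have F5 : p ⬝ᵥ M⁻¹ *ᵥ g = f₀ (M⁻¹ *ᵥ p) := by
    calc p ⬝ᵥ M⁻¹ *ᵥ g = g ⬝ᵥ M⁻¹ *ᵥ p := Sym p g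
      _ = (M⁻¹ *ᵥ p) ⬝ᵥ g := dotProduct_comm _ _
      _ = (M⁻¹ *ᵥ p) ⬝ᵥ grad U q := by rw [hg]
      _ = f₀ (M⁻¹ *ᵥ p) := by rw [hf₀, conv q]
  have F5' : p ⬝ᵥ M⁻¹ *ᵥ g₁ = f₁ (M⁻¹ *ᵥ p) := by
    calc p ⬝ᵥ M⁻¹ *ᵥ g₁ = g₁ ⬝ᵥ M⁻¹ *ᵥ p := Sym p g₁
      _ = (M⁻¹ *ᵥ p) ⬝ᵥ g₁ := dotProduct_comm _ _
      _ = (M⁻¹ *ᵥ p) ⬝ᵥ grad U q₁ := by rw [hg₁]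
      _ = f₁ (M⁻¹ *ᵥ p) := by rw [hf₁, conv q₁]
  have F6 : g ⬝ᵥ M⁻¹ *ᵥ g = f₀ (M⁻¹ *ᵥ g) := by
    calc g ⬝ᵥ M⁻¹ *ᵥ g = (M⁻¹ *ᵥ g) ⬝ᵥ g := dotProduct_comm _ _
      _ = (M⁻¹ *ᵥ g) ⬝ᵥ grad U q := by rw [hg]
      _ = f₀ (M⁻¹ *ᵥ g) := by rw [hf₀, conv q]
  have F1 : p ⬝ᵥ M⁻¹ *ᵥ g₁ = p ⬝ᵥ M⁻¹ *ᵥ g + bw + L := by rw [hL]; ring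
  have F2 : U q₁ = U q + f₀ δ + (1/2) * ((B δ) δ) + r := by rw [hr]; ring
  have F3 : f₀ δ = h * f₀ (M⁻¹ *ᵥ p) - (h^2/2) * f₀ (M⁻¹ *ᵥ g) := by
    conv_lhs => rw [hδws]
    rw [map_sub, _root_.map_smul, _root_.map_smul]
    simp [smul_eq_mul]
  have F4 : (B δ) δ = h * bw - (h^2/2) * bs := by
    calc (B δ) δ = (B δ) (h • (M⁻¹ *ᵥ p) - (h^2/2) • (M⁻¹ *ᵥ g)) := by rw [← hδws]
      _ = h * ((B δ) (M⁻¹ *ᵥ p)) - (h^2/2) * ((B δ) (M⁻¹ *ᵥ g)) := by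
          rw [map_sub, _root_.map_smul, _root_.map_smul]; simp [smul_eq_mul]
      _ = h * bw - (h^2/2) * bs := by rw [hbw, hbs]
  have hge : g₁ = g + e := by rw [he]; abel
  have F7 : g ⬝ᵥ M⁻¹ *ᵥ g₁ = g ⬝ᵥ M⁻¹ *ᵥ g + g ⬝ᵥ M⁻¹ *ᵥ e := by
    conv_lhs => rw [hge]
    rw [Matrix.mulVec_add, dotProduct_add]
  have F8 : g₁ ⬝ᵥ M⁻¹ *ᵥ g₁
      = g ⬝ᵥ M⁻¹ *ᵥ g + g ⬝ᵥ M⁻¹ *ᵥ e + e ⬝ᵥ M⁻¹ *ᵥ g + e ⬝ᵥ M⁻¹ *ᵥ e := by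
    conv_lhs => rw [hge]
    rw [Matrix.mulVec_add, add_dotProduct, dotProduct_add,
      dotProduct_add]
    ring
  have expand : (1/2) * (p₁ ⬝ᵥ M⁻¹ *ᵥ p₁) - (1/2) * (p ⬝ᵥ M⁻¹ *ᵥ p)
      = -(h/2) * (p ⬝ᵥ M⁻¹ *ᵥ g) - (h/2) * (p ⬝ᵥ M⁻¹ *ᵥ g₁)
        + (h^2/8) * ((g ⬝ᵥ M⁻¹ *ᵥ g) + 2 * (g ⬝ᵥ M⁻¹ *ᵥ g₁) + (g₁ ⬝ᵥ M⁻¹ *ᵥ g₁)) := by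
    rw [hp₁, hph]
    simp only [Matrix.mulVec_sub, Matrix.mulVec_smul, sub_dotProduct,
      dotProduct_sub, smul_dotProduct, dotProduct_smul, smul_eq_mul]
    rw [Sym g p, Sym g₁ p, Sym g₁ g]
    ring
  have key : ((1/2) * (p₁ ⬝ᵥ M⁻¹ *ᵥ p₁) + U q₁) - ((1/2) * (p ⬝ᵥ M⁻¹ *ᵥ p) + U q)
      = -(h/2) * L + r - (h^2/4) * bs
        + (h^2/8) * (3 * (g ⬝ᵥ M⁻¹ *ᵥ e) + (e ⬝ᵥ M⁻¹ *ᵥ g) + (e ⬝ᵥ M⁻¹ *ᵥ e)) := by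
    linear_combination expand + F2 + F3 + (1/2) * F4 + (-h) * F5 + (h^2/2) * F6
      + (-(h/2)) * F1 + (h^2/4) * F7 + (h^2/8) * F8
  -- norm bounds
  have hq1q : q₁ - q = δ := by rw [hq₁]; abel
  have hgK : ‖g‖ ≤ K := by rw [hg]; exact (norm_grad_le U q).trans (hb1 q)
  have hphb : ‖ph‖ ≤ ρ + K := by
    rw [hph]
    refine (norm_sub_le _ _).trans ?_
    rw [norm_smul, Real.norm_eq_abs, abs_of_nonneg (by linarith : (0:ℝ) ≤ h/2)]
    have h2 : (h/2) * ‖g‖ ≤ 1 * K :=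
      mul_le_mul (by linarith) hgK (norm_nonneg g) (by norm_num)
    linarith [hp]
  have hδb : ‖δ‖ ≤ h * D := by
    rw [hδ, norm_smul, Real.norm_eq_abs, abs_of_nonneg hh0']
    have h1 := hcAb ph
    have h2 : cA * ‖ph‖ ≤ cA * (ρ + K) := mul_le_mul_of_nonneg_left hphb hcA0.le
    rw [hD]
    refine mul_le_mul_of_nonneg_left ?_ hh0'
    exact h1.trans h2
  have hq1qn : ‖q₁ - q‖ ≤ h * D := by rw [hq1q]; exact hδb
  have hwb : ‖M⁻¹ *ᵥ p‖ ≤ cA * ρ :=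
    (hcAb p).trans (mul_le_mul_of_nonneg_left hp hcA0.le)
  have hsb : ‖M⁻¹ *ᵥ g‖ ≤ cA * K :=
    (hcAb g).trans (mul_le_mul_of_nonneg_left hgK hcA0.le)
  have heb : ‖e‖ ≤ K * (h * D) := by
    rw [he, hg₁, hg]
    refine (norm_grad_sub_le U q₁ q).trans ?_
    refine (lip1 q₁ q).trans ?_
    exact mul_le_mul_of_nonneg_left hq1qn hK.le
  have hMe : ‖M⁻¹ *ᵥ e‖ ≤ cA * (K * (h * D)) :=
    (hcAb e).trans (mul_le_mul_of_nonneg_left heb hcA0.le)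
  -- bound on L
  have hLb : |L| ≤ c1 * h^2 := by
    have hLeq : L = (f₁ - f₀ - B δ) (M⁻¹ *ᵥ p) := by
      rw [hL, F5, F5', hbw]
      simp [ContinuousLinearMap.sub_apply]
    have h1 : ‖f₁ - f₀ - B δ‖ ≤ K * (h*D) * (h*D) := by
      have h2 := T2 q q₁
      rw [hq1q] at h2
      rw [hf₁, hf₀, hBB]
      refine h2.trans ?_
      have m : ‖δ‖ * ‖δ‖ ≤ (h*D) * (h*D) := mul_le_mul hδb hδb (norm_nonneg _) hhD0
      calc K * ‖δ‖ * ‖δ‖ = K * (‖δ‖ * ‖δ‖) := by ring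
        _ ≤ K * ((h*D) * (h*D)) := mul_le_mul_of_nonneg_left m hK.le
        _ = K * (h*D) * (h*D) := by ring
    rw [hLeq, ← Real.norm_eq_abs]
    refine ((f₁ - f₀ - B δ).le_opNorm _).trans ?_
    have h3 := mul_le_mul h1 hwb (norm_nonneg _)
      (mul_nonneg (mul_nonneg hK.le hhD0) hhD0)
    rw [hc1]
    exact h3.trans (le_of_eq (by ring))
  -- bound on r
  have hrb : |r| ≤ c2 * h^3 := by
    have h2 := T1 q q₁
    rw [hq1q] at h2
    rw [hr, hf₀, hBB]
    refine h2.trans ?_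
    have m1 : ‖δ‖ * ‖δ‖ ≤ (h*D) * (h*D) := mul_le_mul hδb hδb (norm_nonneg _) hhD0
    have m2 : ‖δ‖ * ‖δ‖ * ‖δ‖ ≤ (h*D) * (h*D) * (h*D) :=
      mul_le_mul m1 hδb (norm_nonneg _) (mul_nonneg hhD0 hhD0)
    rw [hc2]
    calc K * ‖δ‖ * ‖δ‖ * ‖δ‖ = K * (‖δ‖ * ‖δ‖ * ‖δ‖) := by ring
      _ ≤ K * ((h*D) * (h*D) * (h*D)) := mul_le_mul_of_nonneg_left m2 hK.le
      _ = K * (D * D * D) * h^3 := by ring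
  -- bound on bs
  have hbsb : |bs| ≤ c3 * h := by
    rw [hbs, ← Real.norm_eq_abs]
    refine (B.le_opNorm₂ δ (M⁻¹ *ᵥ g)).trans ?_
    have hBn : ‖B‖ ≤ K := by rw [hBB]; exact hb2 q
    have h1 : ‖B‖ * ‖δ‖ ≤ K * (h * D) :=
      mul_le_mul hBn hδb (norm_nonneg _) hK.le
    have h2 : ‖B‖ * ‖δ‖ * ‖M⁻¹ *ᵥ g‖ ≤ (K * (h*D)) * (cA * K) :=
      mul_le_mul h1 hsb (norm_nonneg _) (mul_nonneg hK.le hhD0)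
    rw [hc3]
    exact h2.trans (le_of_eq (by ring))
  -- dot product bounds
  have hgae : |g ⬝ᵥ M⁻¹ *ᵥ e| ≤ c4 * h := by
    refine (abs_dotProduct_le _ _).trans ?_
    have h1 : (ν:ℝ) * ‖g‖ ≤ (ν:ℝ) * K :=
      mul_le_mul_of_nonneg_left hgK (Nat.cast_nonneg ν)
    have h2 : (ν:ℝ) * ‖g‖ * ‖M⁻¹ *ᵥ e‖ ≤ ((ν:ℝ) * K) * (cA * (K * (h*D))) :=
      mul_le_mul h1 hMe (norm_nonneg _) (mul_nonneg (Nat.cast_nonneg ν) hK.le)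
    rw [hc4]
    exact h2.trans (le_of_eq (by ring))
  have heag : |e ⬝ᵥ M⁻¹ *ᵥ g| ≤ c4' * h := by
    refine (abs_dotProduct_le _ _).trans ?_
    have h1 : (ν:ℝ) * ‖e‖ ≤ (ν:ℝ) * (K * (h*D)) :=
      mul_le_mul_of_nonneg_left heb (Nat.cast_nonneg ν)
    have h2 : (ν:ℝ) * ‖e‖ * ‖M⁻¹ *ᵥ g‖ ≤ ((ν:ℝ) * (K * (h*D))) * (cA * K) :=
      mul_le_mul h1 hsb (norm_nonneg _)
        (mul_nonneg (Nat.cast_nonneg ν) (mul_nonneg hK.le hhD0))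
    rw [hc4']
    exact h2.trans (le_of_eq (by ring))
  have heae : |e ⬝ᵥ M⁻¹ *ᵥ e| ≤ c5 * h^2 := by
    refine (abs_dotProduct_le _ _).trans ?_
    have h1 : (ν:ℝ) * ‖e‖ ≤ (ν:ℝ) * (K * (h*D)) :=
      mul_le_mul_of_nonneg_left heb (Nat.cast_nonneg ν)
    have h2 : (ν:ℝ) * ‖e‖ * ‖M⁻¹ *ᵥ e‖ ≤ ((ν:ℝ) * (K * (h*D))) * (cA * (K * (h*D))) :=
      mul_le_mul h1 hMe (norm_nonneg _)
        (mul_nonneg (Nat.cast_nonneg ν) (mul_nonneg hK.le hhD0))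
    rw [hc5]
    exact h2.trans (le_of_eq (by ring))
  -- assemble
  rw [hΔ, key]
  have step1 : |(-(h/2) * L + r - (h^2/4) * bs
      + (h^2/8) * (3 * (g ⬝ᵥ M⁻¹ *ᵥ e) + (e ⬝ᵥ M⁻¹ *ᵥ g) + (e ⬝ᵥ M⁻¹ *ᵥ e)))|
      ≤ (h/2) * |L| + |r| + (h^2/4) * |bs|
        + (h^2/8) * (3 * |g ⬝ᵥ M⁻¹ *ᵥ e| + |e ⬝ᵥ M⁻¹ *ᵥ g| + |e ⬝ᵥ M⁻¹ *ᵥ e|) := by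
    have a4 : |(-(h/2) * L)| = (h/2) * |L| := by
      rw [show -(h/2) * L = -((h/2) * L) by ring, abs_neg, abs_mul,
        abs_of_nonneg (by linarith : (0:ℝ) ≤ h/2)]
    have a5 : |(h^2/4) * bs| = (h^2/4) * |bs| := by
      rw [abs_mul, abs_of_nonneg (by positivity : (0:ℝ) ≤ h^2/4)]
    have b3 : |3 * (g ⬝ᵥ M⁻¹ *ᵥ e)| = 3 * |g ⬝ᵥ M⁻¹ *ᵥ e| := by
      rw [abs_mul]; norm_num
    have a6 : |(h^2/8) * (3 * (g ⬝ᵥ M⁻¹ *ᵥ e) + (e ⬝ᵥ M⁻¹ *ᵥ g) + (e ⬝ᵥ M⁻¹ *ᵥ e))|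
        ≤ (h^2/8) * (3 * |g ⬝ᵥ M⁻¹ *ᵥ e| + |e ⬝ᵥ M⁻¹ *ᵥ g| + |e ⬝ᵥ M⁻¹ *ᵥ e|) := by
      rw [abs_mul, abs_of_nonneg (by positivity : (0:ℝ) ≤ h^2/8)]
      refine mul_le_mul_of_nonneg_left ?_ (by positivity)
      calc |3 * (g ⬝ᵥ M⁻¹ *ᵥ e) + (e ⬝ᵥ M⁻¹ *ᵥ g) + (e ⬝ᵥ M⁻¹ *ᵥ e)|
          ≤ |3 * (g ⬝ᵥ M⁻¹ *ᵥ e) + (e ⬝ᵥ M⁻¹ *ᵥ g)| + |e ⬝ᵥ M⁻¹ *ᵥ e| := abs_add_le _ _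
        _ ≤ (|3 * (g ⬝ᵥ M⁻¹ *ᵥ e)| + |e ⬝ᵥ M⁻¹ *ᵥ g|) + |e ⬝ᵥ M⁻¹ *ᵥ e| :=
            add_le_add_left (abs_add_le _ _) _
        _ = 3 * |g ⬝ᵥ M⁻¹ *ᵥ e| + |e ⬝ᵥ M⁻¹ *ᵥ g| + |e ⬝ᵥ M⁻¹ *ᵥ e| := by rw [b3]
    calc |(-(h/2) * L + r - (h^2/4) * bs
        + (h^2/8) * (3 * (g ⬝ᵥ M⁻¹ *ᵥ e) + (e ⬝ᵥ M⁻¹ *ᵥ g) + (e ⬝ᵥ M⁻¹ *ᵥ e)))|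
        ≤ |(-(h/2) * L + r - (h^2/4) * bs)|
          + |(h^2/8) * (3 * (g ⬝ᵥ M⁻¹ *ᵥ e) + (e ⬝ᵥ M⁻¹ *ᵥ g) + (e ⬝ᵥ M⁻¹ *ᵥ e))| :=
          abs_add_le _ _
      _ ≤ (|(-(h/2) * L + r)| + |(h^2/4) * bs|)
          + |(h^2/8) * (3 * (g ⬝ᵥ M⁻¹ *ᵥ e) + (e ⬝ᵥ M⁻¹ *ᵥ g) + (e ⬝ᵥ M⁻¹ *ᵥ e))| :=
          add_le_add_left (abs_sub _ _) _
      _ ≤ ((|(-(h/2) * L)| + |r|) + |(h^2/4) * bs|)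
          + |(h^2/8) * (3 * (g ⬝ᵥ M⁻¹ *ᵥ e) + (e ⬝ᵥ M⁻¹ *ᵥ g) + (e ⬝ᵥ M⁻¹ *ᵥ e))| :=
          add_le_add_left (add_le_add_left (abs_add_le _ _) _) _
      _ = (((h/2) * |L| + |r|) + (h^2/4) * |bs|)
          + |(h^2/8) * (3 * (g ⬝ᵥ M⁻¹ *ᵥ e) + (e ⬝ᵥ M⁻¹ *ᵥ g) + (e ⬝ᵥ M⁻¹ *ᵥ e))| := by
          rw [a4, a5]
      _ ≤ (h/2) * |L| + |r| + (h^2/4) * |bs|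
          + (h^2/8) * (3 * |g ⬝ᵥ M⁻¹ *ᵥ e| + |e ⬝ᵥ M⁻¹ *ᵥ g| + |e ⬝ᵥ M⁻¹ *ᵥ e|) :=
          add_le_add_right a6 _
  refine step1.trans ?_
  have s2 : (h/2) * |L| ≤ (h/2) * (c1 * h^2) :=
    mul_le_mul_of_nonneg_left hLb (by linarith)
  have s3 : (h^2/4) * |bs| ≤ (h^2/4) * (c3 * h) :=
    mul_le_mul_of_nonneg_left hbsb (by positivity)
  have s4 : (h^2/8) * (3 * |g ⬝ᵥ M⁻¹ *ᵥ e| + |e ⬝ᵥ M⁻¹ *ᵥ g| + |e ⬝ᵥ M⁻¹ *ᵥ e|)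
      ≤ (h^2/8) * (3 * (c4 * h) + c4' * h + c5 * h^2) := by
    refine mul_le_mul_of_nonneg_left ?_ (by positivity)
    have u1 : 3 * |g ⬝ᵥ M⁻¹ *ᵥ e| ≤ 3 * (c4 * h) :=
      mul_le_mul_of_nonneg_left hgae (by norm_num)
    exact add_le_add (add_le_add u1 heag) heae
  have h3nn : (0:ℝ) ≤ h^3 := pow_nonneg hh0' 3
  have h4le : h^4 ≤ h^3 := by
    calc h^4 = h^3 * h := by ring
      _ ≤ h^3 * 1 := mul_le_mul_of_nonneg_left hh1 h3nn
      _ = h^3 := by ring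
  have hs5' : (c5/8) * h^4 ≤ (c5/8) * h^3 :=
    mul_le_mul_of_nonneg_left h4le (div_nonneg hc50 (by norm_num))
  calc (h/2) * |L| + |r| + (h^2/4) * |bs|
        + (h^2/8) * (3 * |g ⬝ᵥ M⁻¹ *ᵥ e| + |e ⬝ᵥ M⁻¹ *ᵥ g| + |e ⬝ᵥ M⁻¹ *ᵥ e|)
      ≤ (h/2) * (c1 * h^2) + c2 * h^3 + (h^2/4) * (c3 * h)
        + (h^2/8) * (3 * (c4 * h) + c4' * h + c5 * h^2) :=
        add_le_add (add_le_add (add_le_add s2 hrb) s3) s4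
    _ = ((c1/2 + c2 + c3/4 + (3*c4 + c4')/8) * h^3 + (c5/8) * h^4) := by ring
    _ ≤ ((c1/2 + c2 + c3/4 + (3*c4 + c4')/8) * h^3 + (c5/8) * h^3) :=
        add_le_add_right hs5' _
    _ = S * h^3 := by rw [hS]; ring
    _ ≤ |S| * h^3 := mul_le_mul_of_nonneg_right (le_abs_self S) h3nn
    _ ≤ (1 + |S|) * h^3 := by
        calc |S| * h^3 ≤ |S| * h^3 + h^3 := le_add_of_nonneg_right h3nn
          _ = (1 + |S|) * h^3 := by ring
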